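/- arXiv:1610.08459 — 5 statements merged into one kernel-verified Lean document; each statement's English description precedes it below -/
import Mathlib

section
/- Let λ be a regular cardinal such that F(k) is λ-presentable in C for every object k of K. Let (X, E) be a marked object such that X is λ-presentable in C and the total cardinality of E (i.e., the cardinality of the disjoint union of the sets E(k) over objects k of K) is less than λ. Then (X, E) is a λ-presentable object of the category C^m of marked objects. -/
open CategoryTheory Limits

universe w v u

/-- A `K`-marked object of `C`: an object together with a subfunctor of `Hom(F(-), X)`. -/
structure MarkedObj {C : Type u} [Category.{v} C] {K : Type w} [Category.{v} K]
    (F : K ⥤ C) where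
  pt : C
  marked : ∀ k : K, Set (F.obj k ⟶ pt)
  comp_mem : ∀ {k k' : K} (g : k ⟶ k') {f : F.obj k' ⟶ pt},
    f ∈ marked k' → F.map g ≫ f ∈ marked k

namespace MarkedObj

variable {C : Type u} [Category.{v} C] {K : Type w} [Category.{v} K] {F : K ⥤ C}

/-- Morphisms of marked objects preserve marked maps. -/
@[ext]
structure Hom (A B : MarkedObj F) where
  hom : A.pt ⟶ B.pt
  pres : ∀ ⦃k : K⦄ ⦃e : F.obj k ⟶ A.pt⦄, e ∈ A.marked k → e ≫ hom ∈ B.marked k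

instance : Category (MarkedObj F) where
  Hom := Hom
  id A := ⟨𝟙 _, fun k e he => by simpa using he⟩
  comp f g := ⟨f.hom ≫ g.hom, fun k e he => by
    simpa [Category.assoc] using g.pres (f.pres he)⟩
  id_comp f := by apply Hom.ext; simp [CategoryStruct.id, CategoryStruct.comp]
  comp_id f := by apply Hom.ext; simp [CategoryStruct.id, CategoryStruct.comp]
  assoc f g h := by apply Hom.ext; simp [CategoryStruct.comp]

@[simp] lemma id_hom (A : MarkedObj F) : Hom.hom (𝟙 A) = 𝟙 A.pt := rfl
@[simp] lemma comp_hom {A B D : MarkedObj F} (f : A ⟶ B) (g : B ⟶ D) :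
    (f ≫ g).hom = f.hom ≫ g.hom := rfl

/-- The forgetful functor. -/
def forget (F : K ⥤ C) : MarkedObj F ⥤ C where
  obj A := A.pt
  map f := f.hom

/-- The flat marked object: no maps are marked. -/
def flatObj (F : K ⥤ C) (X : C) : MarkedObj F :=
  ⟨X, fun _ => ∅, by intro k k' g f h; exact h.elim⟩

/-- The flat functor, left adjoint to `forget`. -/
def flat (F : K ⥤ C) : C ⥤ MarkedObj F where
  obj X := flatObj F X
  map f := ⟨f, by intro k e h; exact h.elim⟩

/-- The sharp marked object: all maps are marked. -/
def sharpObj (F : K ⥤ C) (X : C) : MarkedObj F :=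
  ⟨X, fun _ => Set.univ, by intro k k' g f _; trivial⟩

/-- The sharp functor, right adjoint to `forget`. -/
def sharp (F : K ⥤ C) : C ⥤ MarkedObj F where
  obj X := sharpObj F X
  map f := ⟨f, by intro k e _; trivial⟩

end MarkedObj


/-- A category `J` is `κ`-filtered if every diagram indexed by a category with fewer
than `κ` objects and fewer than `κ` morphisms admits a cocone. -/
def IsCardFiltered (J : Type v) [Category.{v} J] (κ : Cardinal.{v}) : Prop :=
  ∀ (A : Type v) (_ : SmallCategory A), Cardinal.mk A < κ →
    Cardinal.mk (Σ a b : A, a ⟶ b) < κ →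
    ∀ G : A ⥤ J, Nonempty (Limits.Cocone G)

/-- An object `X` is `κ`-presentable if `Hom(X, -)` preserves `κ`-filtered colimits. -/
def IsPresentableObj {C : Type u} [Category.{v} C] (κ : Cardinal.{v}) (X : C) : Prop :=
  ∀ (J : Type v) (_ : SmallCategory J), IsCardFiltered J κ →
    Nonempty (PreservesColimitsOfShape J (coyoneda.obj (Opposite.op X)))

/-- A category is locally presentable if it is cocomplete and, for some regular
cardinal `κ`, there is a (small) set of `κ`-presentable objects such that every
object is a `κ`-filtered colimit of objects from this set. -/
def LocallyPresentable (C : Type u) [Category.{v} C] : Prop :=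
  HasColimits C ∧ ∃ κ : Cardinal.{v}, κ.IsRegular ∧ ∃ S : Set C, Small.{v} S ∧
    (∀ X ∈ S, IsPresentableObj κ X) ∧
    ∀ X : C, ∃ (J : Type v) (_ : SmallCategory J) (D : J ⥤ C) (c : Cocone D)
      (_ : IsColimit c), IsCardFiltered J κ ∧ (∀ j, D.obj j ∈ S) ∧ c.pt = X

section Aux

variable {C : Type u} [Category.{v} C] {K : Type v} [SmallCategory K] {F : K ⥤ C}

/-- A `κ`-filtered category (for `κ` regular) is filtered. -/
lemma IsCardFiltered.isFiltered {J : Type v} [SmallCategory J] {l : Cardinal.{v}}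
    (hl : l.IsRegular) (hJ : IsCardFiltered J l) : IsFiltered J := by
  apply IsFiltered.of_cocone_nonempty.{v}
  intro A _ _ G
  exact hJ A _ (lt_of_lt_of_le (Cardinal.mk_lt_aleph0_iff.mpr inferInstance) hl.aleph0_le)
    (lt_of_lt_of_le (Cardinal.mk_lt_aleph0_iff.mpr inferInstance) hl.aleph0_le) G

/-- The cocone over `G` with sharp cocone point induced by a cocone over the
underlying diagram. -/
@[simps]
def MarkedObj.sharpCocone {J : Type v} [SmallCategory J] (G : J ⥤ MarkedObj F)
    (s : Cocone (G ⋙ MarkedObj.forget F)) : Cocone G where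
  pt := MarkedObj.sharpObj F s.pt
  ι :=
    { app := fun j => ⟨s.ι.app j, fun _ _ _ => trivial⟩
      naturality := fun a b f => by
        apply MarkedObj.Hom.ext
        exact s.ι.naturality f }

/-- The forgetful functor preserves colimit cocones. -/
noncomputable def MarkedObj.forgetIsColimit {J : Type v} [SmallCategory J]
    {G : J ⥤ MarkedObj F} {c : Cocone G} (hc : IsColimit c) :
    IsColimit ((MarkedObj.forget F).mapCocone c) where
  desc s := (hc.desc (MarkedObj.sharpCocone G s)).hom
  fac s j := congrArg MarkedObj.Hom.hom (hc.fac (MarkedObj.sharpCocone G s) j)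
  uniq s m hm := congrArg MarkedObj.Hom.hom
    (hc.uniq (MarkedObj.sharpCocone G s) ⟨m, fun _ _ _ => trivial⟩ (fun j => by
      apply MarkedObj.Hom.ext
      exact hm j))

/-- In a colimit of marked objects, every marked map factors through a stage by a
marked map. -/
lemma MarkedObj.marked_of_isColimit {J : Type v} [SmallCategory J]
    {G : J ⥤ MarkedObj F} {c : Cocone G} (hc : IsColimit c) {k : K}
    {e : F.obj k ⟶ c.pt.pt} (he : e ∈ c.pt.marked k) :
    ∃ j, ∃ m ∈ (G.obj j).marked k, e = m ≫ (c.ι.app j).hom := by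
  let M : MarkedObj F :=
    { pt := c.pt.pt
      marked := fun k => {e | ∃ j, ∃ m ∈ (G.obj j).marked k, e = m ≫ (c.ι.app j).hom}
      comp_mem := by
        rintro k k' g f ⟨j, m, hm, rfl⟩
        exact ⟨j, F.map g ≫ m, (G.obj j).comp_mem g hm, by simp⟩ }
  let c' : Cocone G :=
    { pt := M
      ι :=
        { app := fun j => ⟨(c.ι.app j).hom, fun k e he => ⟨j, e, he, rfl⟩⟩
          naturality := fun a b f => by
            apply MarkedObj.Hom.ext
            have h := congrArg MarkedObj.Hom.hom (c.ι.naturality f)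
            simp only [MarkedObj.comp_hom, MarkedObj.id_hom, Category.comp_id,
              Functor.const_obj_map] at h
            simpa using h } }
  have hu : (hc.desc c').hom = 𝟙 c.pt.pt := by
    apply (MarkedObj.forgetIsColimit hc).hom_ext
    intro j
    show (c.ι.app j).hom ≫ (hc.desc c').hom = (c.ι.app j).hom ≫ 𝟙 _
    rw [Category.comp_id, ← MarkedObj.comp_hom, hc.fac c' j]
  have h2 := (hc.desc c').pres he
  rw [hu] at h2
  have h3 : e ∈ c'.pt.marked k := by simpa using h2
  exact h3

/-- Two maps from a presentable object into a filtered colimit of marked objects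
that agree in the colimit agree at some stage. -/
lemma MarkedObj.exists_map_eq {J : Type v} [SmallCategory J] [IsFiltered J]
    {G : J ⥤ MarkedObj F} {c : Cocone G} (hc : IsColimit c) {Y : C}
    (hY : Nonempty (PreservesColimitsOfShape J (coyoneda.obj (Opposite.op Y))))
    {a b : J} {ya : Y ⟶ (G.obj a).pt} {yb : Y ⟶ (G.obj b).pt}
    (h : ya ≫ (c.ι.app a).hom = yb ≫ (c.ι.app b).hom) :
    ∃ (d : J) (f : a ⟶ d) (g : b ⟶ d),
      ya ≫ (G.map f).hom = yb ≫ (G.map g).hom := by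
  haveI := hY.some
  have hcY : IsColimit ((coyoneda.obj (Opposite.op Y)).mapCocone
      ((MarkedObj.forget F).mapCocone c)) :=
    isColimitOfPreserves _ (MarkedObj.forgetIsColimit hc)
  have := (Types.FilteredColimit.isColimit_eq_iff
    ((G ⋙ MarkedObj.forget F) ⋙ coyoneda.obj (Opposite.op Y)) hcY
    (i := a) (j := b) (xi := ya) (xj := yb)).mp h
  exact this

end Aux

/-- let `λ` be a regular cardinal such that every `F(k)` is
`λ`-presentable.  If `(X, E)` is a marked object with `X` `λ`-presentable and the
total number of marked maps less than `λ`, then `(X, E)` is `λ`-presentable in the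
category of marked objects. -/
theorem markedObj_presentableObj {C : Type u} [Category.{v} C] {K : Type v}
    [SmallCategory K] (F : K ⥤ C) (hC : LocallyPresentable C)
    (l : Cardinal.{v}) (hl : l.IsRegular)
    (hF : ∀ k : K, IsPresentableObj l (F.obj k))
    (X : MarkedObj F) (hX : IsPresentableObj l X.pt)
    (hE : Cardinal.mk (Σ k : K, X.marked k) < l) :
    IsPresentableObj l X := by
  intro J instJ hJ
  haveI hfil : IsFiltered J := IsCardFiltered.isFiltered hl hJ
  refine ⟨⟨fun {G} => ⟨fun {c} hc => ⟨?_⟩⟩⟩⟩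
  apply Types.FilteredColimit.isColimitOf
  · -- joint surjectivity
    intro f
    have hcC := MarkedObj.forgetIsColimit hc
    haveI := (hX J instJ hJ).some
    have hcX : IsColimit ((coyoneda.obj (Opposite.op X.pt)).mapCocone
        ((MarkedObj.forget F).mapCocone c)) := isColimitOfPreserves _ hcC
    obtain ⟨j₀, h₀, hh₀⟩ := Types.jointly_surjective _ hcX f.hom
    have hh₀' : h₀ ≫ (c.ι.app j₀).hom = f.hom := hh₀
    have key : ∀ s : Σ k : K, X.marked k, ∃ (d : J) (u : j₀ ⟶ d),
        (s.2.1 ≫ h₀) ≫ (G.map u).hom ∈ (G.obj d).marked s.1 := by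
      intro s
      obtain ⟨j₁, m, hm, hme⟩ := MarkedObj.marked_of_isColimit hc (f.pres s.2.2)
      have heq : (s.2.1 ≫ h₀) ≫ (c.ι.app j₀).hom = m ≫ (c.ι.app j₁).hom := by
        exact (Category.assoc _ _ _).trans ((congrArg (fun t => s.2.1 ≫ t) hh₀').trans hme)
      obtain ⟨d, u, v, huv⟩ := MarkedObj.exists_map_eq hc (hF s.1 J instJ hJ) heq
      refine ⟨d, u, ?_⟩
      convert (G.map v).pres hm using 1
      exact huv
    choose d u hu using key
    have hcard1 : Cardinal.mk (WidePushoutShape (Σ k : K, X.marked k)) < l := by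
      have h1 : Cardinal.mk (WidePushoutShape (Σ k : K, X.marked k)) =
          Cardinal.mk (Σ k : K, X.marked k) + 1 := Cardinal.mk_option
      rw [h1]
      exact Cardinal.add_lt_of_lt hl.aleph0_le hE
        (lt_of_lt_of_le Cardinal.one_lt_aleph0 hl.aleph0_le)
    have hcard2 : Cardinal.mk
        (Σ a b : WidePushoutShape (Σ k : K, X.marked k), a ⟶ b) < l := by
      have hinj : Function.Injective
          (fun x : Σ a b : WidePushoutShape (Σ k : K, X.marked k), a ⟶ b =>
            (x.1, x.2.1)) := by
        rintro ⟨a, b, f⟩ ⟨a', b', f'⟩ hxy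
        simp only [Prod.mk.injEq] at hxy
        obtain ⟨rfl, rfl⟩ := hxy
        simp [Subsingleton.elim f f']
      refine lt_of_le_of_lt (Cardinal.mk_le_of_injective hinj) ?_
      exact Cardinal.mul_lt_of_lt hl.aleph0_le hcard1 hcard1
    obtain ⟨cc⟩ := hJ (WidePushoutShape (Σ k : K, X.marked k)) inferInstance
      hcard1 hcard2 (WidePushoutShape.wideSpan j₀ d u)
    have hw : ∀ s : Σ k : K, X.marked k,
        u s ≫ cc.ι.app (some s) = cc.ι.app none := fun s => by
      exact (cc.ι.naturality (WidePushoutShape.Hom.init s)).trans (Category.comp_id _)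
    refine ⟨cc.pt, ⟨h₀ ≫ (G.map (cc.ι.app none)).hom, fun k e he => ?_⟩, ?_⟩
    · have h1 := hu ⟨k, ⟨e, he⟩⟩
      have h2 := (G.map (cc.ι.app (some ⟨k, ⟨e, he⟩⟩))).pres h1
      have h4 : G.map (cc.ι.app none) = G.map (u ⟨k, ⟨e, he⟩⟩) ≫ G.map (cc.ι.app (some ⟨k, ⟨e, he⟩⟩)) :=
        (congrArg G.map (hw ⟨k, ⟨e, he⟩⟩).symm).trans (G.map_comp _ _)
      rw [h4]
      have h5 : e ≫ h₀ ≫ (G.map (u ⟨k, ⟨e, he⟩⟩) ≫ G.map (cc.ι.app (some ⟨k, ⟨e, he⟩⟩))).hom =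
          ((e ≫ h₀) ≫ (G.map (u ⟨k, ⟨e, he⟩⟩)).hom) ≫ (G.map (cc.ι.app (some ⟨k, ⟨e, he⟩⟩))).hom :=
        ((Category.assoc _ _ _).trans (Category.assoc _ _ _)).symm
      exact Eq.mpr (congrArg (· ∈ (G.obj cc.pt).marked k) h5) h2
    · apply MarkedObj.Hom.ext
      have hnat := congrArg MarkedObj.Hom.hom (c.ι.naturality (cc.ι.app none))
      simp only [MarkedObj.comp_hom, Functor.const_obj_map, MarkedObj.id_hom,
        Functor.const_obj_obj, Category.comp_id, WidePushoutShape.wideSpan_obj] at hnat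
      show f.hom = (h₀ ≫ (G.map (cc.ι.app none)).hom) ≫ (c.ι.app cc.pt).hom
      exact hh₀'.symm.trans ((congrArg (fun t => h₀ ≫ t) hnat.symm).trans (Category.assoc _ _ _).symm)
  · -- agreement at a stage
    intro i j gi gj hgg
    have hgg' : gi ≫ c.ι.app i = gj ≫ c.ι.app j := hgg
    have h : gi.hom ≫ (c.ι.app i).hom = gj.hom ≫ (c.ι.app j).hom := by
      rw [← MarkedObj.comp_hom, ← MarkedObj.comp_hom, hgg']
    obtain ⟨dd, uf, vg, huv⟩ := MarkedObj.exists_map_eq hc (hX J instJ hJ) h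
    refine ⟨dd, uf, vg, ?_⟩
    apply MarkedObj.Hom.ext
    exact huv
end

section
/- Let f : (X, E) → (Y, E') be a morphism of marked objects such that the underlying morphism U(f) : X → Y is an isomorphism in C. Then f is a pushout (in C^m) of the morphism ∐_{(k,e) ∈ E'} F(k)^♭ → ∐_{(k,e) ∈ E'} (F(k), G{id_{F(k)}}) along the map ∐_{(k,e) ∈ E'} F(k)^♭ → (X, E) induced by the maps F(k) → Y ≅ X for (k, e) ranging over marked maps e : F(k) → Y of (Y, E'). -/
open CategoryTheory Limits

universe w v u

namespace MarkedObj

variable {C : Type u} [Category.{v} C] {K : Type v} [SmallCategory K] (F : K ⥤ C)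

/-- `F(k)` together with the subfunctor of `Hom(F(-), F(k))` generated by the
identity map. -/
def markedId (k : K) : MarkedObj F where
  pt := F.obj k
  marked k' := {f | ∃ g : k' ⟶ k, F.map g = f}
  comp_mem := by
    rintro a b g f ⟨g', rfl⟩
    exact ⟨g ≫ g', by simp⟩

variable [HasColimits C]

/-- The coproduct of a family of marked objects, computed as in `C`, with a map
marked iff it factors through a marked map into one of the summands. -/
noncomputable def sigmaMarked {ι : Type v} (A : ι → MarkedObj F) : MarkedObj F where
  pt := ∐ fun i => (A i).pt
  marked k := {f | ∃ (i : ι) (e : F.obj k ⟶ (A i).pt),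
    e ∈ (A i).marked k ∧ f = e ≫ Sigma.ι (fun i => (A i).pt) i}
  comp_mem := by
    rintro k k' g f ⟨i, e, he, rfl⟩
    exact ⟨i, F.map g ≫ e, (A i).comp_mem g he, by simp⟩

end MarkedObj

open MarkedObj in
/-- a map `f : (X, E) ⟶ (Y, E')` of marked objects which is an
isomorphism on underlying objects is a pushout of the map
`∐_{(k,e) ∈ E'} F(k)^♭ ⟶ ∐_{(k,e) ∈ E'} (F(k), G{id})` along the map
`∐_{(k,e) ∈ E'} F(k)^♭ ⟶ (X, E)` induced by the maps `F(k) ⟶ Y ≅ X`. -/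
theorem markedObj_iso_is_pushout {C : Type u} [Category.{v} C] [HasColimits C]
    {K : Type v} [SmallCategory K] (F : K ⥤ C)
    (X Y : MarkedObj F) (f : X ⟶ Y) (hf : IsIso f.hom) :
    letI ι : Type v := Σ k : K, Y.marked k
    letI P₁ : MarkedObj F := sigmaMarked F (fun i : ι => markedId F i.1)
    letI P₀ : MarkedObj F := flatObj F P₁.pt
    letI top : P₀ ⟶ X :=
      ⟨Sigma.desc (fun i : ι => (i.2 : F.obj i.1 ⟶ Y.pt) ≫ inv f.hom),
        by intro k e h; exact h.elim⟩
    letI left : P₀ ⟶ P₁ := ⟨𝟙 P₁.pt, by intro k e h; exact h.elim⟩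
    letI bottom : P₁ ⟶ Y :=
      ⟨Sigma.desc (fun i : ι => (i.2 : F.obj i.1 ⟶ Y.pt)),
        by rintro k e ⟨i, e', ⟨g, rfl⟩, rfl⟩
           show (F.map g ≫ Sigma.ι (fun i : ι => F.obj i.1) i) ≫
             Sigma.desc (fun i : ι => (i.2 : F.obj i.1 ⟶ Y.pt)) ∈ Y.marked k
           rw [Category.assoc, Sigma.ι_desc]
           exact Y.comp_mem g i.2.2⟩
    IsPushout top left f bottom := by
  have key : ∀ (W : C) (g : X.pt ⟶ W),
      (Sigma.desc fun i : Σ k : K, Y.marked k =>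
        (((i.2 : F.obj i.1 ⟶ Y.pt) ≫ inv f.hom : F.obj i.1 ⟶ X.pt) :
          (markedId F i.1).pt ⟶ X.pt)) ≫ g =
      (Sigma.desc fun i : Σ k : K, Y.marked k =>
        ((i.2 : F.obj i.1 ⟶ Y.pt) : (markedId F i.1).pt ⟶ Y.pt)) ≫ inv f.hom ≫ g := by
    intro W g
    apply Sigma.hom_ext
    intro i
    simp
  refine IsPushout.of_isColimit' ⟨?_⟩ ?_
  · apply Hom.ext
    have h : (Sigma.desc fun i : Σ k : K, Y.marked k =>
        (((i.2 : F.obj i.1 ⟶ Y.pt) ≫ inv f.hom : F.obj i.1 ⟶ X.pt) :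
          (markedId F i.1).pt ⟶ X.pt)) ≫ f.hom =
        𝟙 _ ≫ Sigma.desc fun i : Σ k : K, Y.marked k =>
          ((i.2 : F.obj i.1 ⟶ Y.pt) : (markedId F i.1).pt ⟶ Y.pt) := by
      rw [key, IsIso.inv_hom_id, Category.comp_id, Category.id_comp]
    exact h
  · refine PushoutCocone.IsColimit.mk _
      (fun s => ⟨inv f.hom ≫ s.inl.hom, ?_⟩) (fun s => ?_) (fun s => ?_)
      (fun s m hl hr => ?_)
    · intro k e he
      have hc : (Sigma.desc fun i : Σ k : K, Y.marked k =>
          (((i.2 : F.obj i.1 ⟶ Y.pt) ≫ inv f.hom : F.obj i.1 ⟶ X.pt) :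
            (markedId F i.1).pt ⟶ X.pt)) ≫ s.inl.hom = s.inr.hom :=
        (congrArg Hom.hom s.condition).trans (Category.id_comp _)
      have h1 : (Sigma.ι (fun i : Σ k : K, Y.marked k => (markedId F i.1).pt)
          ⟨k, ⟨e, he⟩⟩) ≫ s.inr.hom ∈ s.pt.marked k :=
        s.inr.pres ⟨⟨k, ⟨e, he⟩⟩, 𝟙 _, ⟨𝟙 k, by simp⟩, (Category.id_comp _).symm⟩
      rw [← hc] at h1
      erw [← Category.assoc, Sigma.ι_desc] at h1
      erw [Category.assoc] at h1
      exact h1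
    · apply Hom.ext
      exact IsIso.hom_inv_id_assoc _ _
    · apply Hom.ext
      have hc : (Sigma.desc fun i : Σ k : K, Y.marked k =>
          (((i.2 : F.obj i.1 ⟶ Y.pt) ≫ inv f.hom : F.obj i.1 ⟶ X.pt) :
            (markedId F i.1).pt ⟶ X.pt)) ≫ s.inl.hom = s.inr.hom :=
        (congrArg Hom.hom s.condition).trans (Category.id_comp _)
      exact (key s.pt.pt s.inl.hom).symm.trans hc
    · apply Hom.ext
      have h := congrArg Hom.hom hl
      simp only [comp_hom] at h
      simp only [← h, IsIso.inv_hom_id_assoc]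
end

section
/- Let I be a class of morphisms of C containing all morphisms of the form in I^m below, and suppose f : (X,E) → (Y,E') is a morphism of marked objects such that U(f) is a retract of a relative I-cell complex X → Z in C (i.e., U(f) is a retract in the arrow category). Define Z' to be the marked object with underlying object Z in which a map F(k) → Z is marked if and only if it factors through Y → Z as a marked map of (Y, E') composed with Y → Z. Then f is a retract, in the arrow category of C^m, of the morphism (X, E) → Z'. -/
open CategoryTheory Limits

universe w v u

/-- suppose the underlying map of `f : (X,E) ⟶ (Y,E')` is a retract
(in the arrow category, via the identity on domains) of a map `g : X ⟶ Z` in `C`,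
witnessed by `s : Y ⟶ Z` and `r : Z ⟶ Y` with `f.hom ≫ s = g`, `g ≫ r = f.hom` and
`s ≫ r = 𝟙`.  Let `Z'` be the marked object with underlying object `Z` in which a
map `F(k) ⟶ Z` is marked iff it is a marked map of `(Y,E')` composed with
`s : Y ⟶ Z`.  Then `f` is a retract, in the arrow category of the category of marked
objects, of the induced map `(X,E) ⟶ Z'`. -/
theorem markedObj_retract {C : Type u} [Category.{v} C] {K : Type w}
    [Category.{v} K] (F : K ⥤ C) (X Y : MarkedObj F) (f : X ⟶ Y)
    (Z : C) (g : X.pt ⟶ Z) (s : Y.pt ⟶ Z) (r : Z ⟶ Y.pt)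
    (hs : f.hom ≫ s = g) (hr : g ≫ r = f.hom) (hsr : s ≫ r = 𝟙 Y.pt) :
    letI Z' : MarkedObj F :=
      ⟨Z, fun k => {h | ∃ e ∈ Y.marked k, h = e ≫ s}, by
        rintro k k' φ h ⟨e, he, rfl⟩
        exact ⟨F.map φ ≫ e, Y.comp_mem φ he, by simp⟩⟩
    letI f' : X ⟶ Z' :=
      ⟨g, by
        intro k e he
        exact ⟨e ≫ f.hom, f.pres he, by rw [← hs, Category.assoc]⟩⟩
    ∃ (i : Arrow.mk f ⟶ Arrow.mk f') (p : Arrow.mk f' ⟶ Arrow.mk f),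
      i ≫ p = 𝟙 (Arrow.mk f) := by
  refine ⟨Arrow.homMk (u := 𝟙 X) (v := ⟨s, fun k e he => ⟨e, he, rfl⟩⟩) ?_,
    Arrow.homMk (u := 𝟙 X)
      (v := ⟨r, by rintro k h ⟨e, he, rfl⟩; simpa [hsr] using he⟩) ?_, ?_⟩
  · apply MarkedObj.Hom.ext
    simp [MarkedObj.comp_hom, hs]
  · apply MarkedObj.Hom.ext
    simp [MarkedObj.comp_hom, hr]
  · ext
    · apply MarkedObj.Hom.ext; simp
    · apply MarkedObj.Hom.ext; simp [hsr]
end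

section
/- Suppose R : C → C with natural transformation t : id ⇒ R is a fibrant replacement functor, in which each t_X is a weak equivalence with R(X) fibrant. Define a map f of marked objects to be a weak equivalence if U(f) is a weak equivalence in C and R^m(f) reflects marked maps (where R^m is the induced marked fibrant replacement, marking a map F(k) → R(U(X)) iff it is homotopic to t_{U(X)} composed with a marked map of X, assuming J = ∅). Then this class of weak equivalences of marked objects satisfies the 2-out-of-3 property. -/
open CategoryTheory Limits

universe w v u

attribute [local simp] coprod.inl_desc coprod.inr_desc coprod.inl_desc_assoc coprod.inr_desc_assoc pushout.inl_desc pushout.inr_desc pushout.inl_desc_assoc pushout.inr_desc_assoc prod.lift_fst prod.lift_snd prod.lift_fst_assoc prod.lift_snd_assoc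

/-- Closure of a class of morphisms under retracts in the arrow category. -/
def RetractClosed {C : Type u} [Category.{v} C] (P : MorphismProperty C) : Prop :=
  ∀ {X Y X' Y' : C} (f : X ⟶ Y) (g : X' ⟶ Y')
    (i : Arrow.mk f ⟶ Arrow.mk g) (p : Arrow.mk g ⟶ Arrow.mk f),
    i ≫ p = 𝟙 (Arrow.mk f) → P g → P f

/-- A model structure on a category: weak equivalences, cofibrations and fibrations
subject to the usual axioms (2-out-of-3, retracts, lifting, factorization). -/
class ModelStruct (C : Type u) [Category.{v} C] where
  W : MorphismProperty C
  Cof : MorphismProperty C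
  Fib : MorphismProperty C
  w_of_iso : ∀ {X Y : C} (f : X ⟶ Y), IsIso f → W f
  w_two_of_three : W.HasTwoOutOfThreeProperty
  w_retract : RetractClosed W
  cof_retract : RetractClosed Cof
  fib_retract : RetractClosed Fib
  lifting_cof_trivFib : ∀ ⦃A B X Y : C⦄ (i : A ⟶ B) (p : X ⟶ Y),
    Cof i → Fib p → W p → HasLiftingProperty i p
  lifting_trivCof_fib : ∀ ⦃A B X Y : C⦄ (i : A ⟶ B) (p : X ⟶ Y),
    Cof i → W i → Fib p → HasLiftingProperty i p
  factorization_cof_trivFib : ∀ {X Y : C} (f : X ⟶ Y),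
    ∃ (Z : C) (i : X ⟶ Z) (p : Z ⟶ Y), Cof i ∧ Fib p ∧ W p ∧ i ≫ p = f
  factorization_trivCof_fib : ∀ {X Y : C} (f : X ⟶ Y),
    ∃ (Z : C) (i : X ⟶ Z) (p : Z ⟶ Y), Cof i ∧ W i ∧ Fib p ∧ i ≫ p = f

variable {C : Type u} [Category.{v} C]

/-- An object is cofibrant if the map from the initial object is a cofibration. -/
def Cofibrant [ModelStruct C] [HasInitial C] (X : C) : Prop :=
  ModelStruct.Cof (initial.to X)

/-- An object is fibrant if the map to the terminal object is a fibration. -/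
def Fibrant [ModelStruct C] [HasTerminal C] (X : C) : Prop :=
  ModelStruct.Fib (terminal.from X)

/-- Left homotopy of maps, via a (good) cylinder object. -/
def LeftHomotopic [ModelStruct C] [HasBinaryCoproducts C] {X Y : C} (f g : X ⟶ Y) : Prop :=
  ∃ (Cl : C) (i₀ i₁ : X ⟶ Cl) (w : Cl ⟶ X) (H : Cl ⟶ Y),
    ModelStruct.Cof (coprod.desc i₀ i₁) ∧ ModelStruct.W w ∧
    i₀ ≫ w = 𝟙 X ∧ i₁ ≫ w = 𝟙 X ∧ i₀ ≫ H = f ∧ i₁ ≫ H = g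


namespace MarkedObj

variable {C : Type u} [Category.{v} C] [ModelStruct C] [HasBinaryCoproducts C]
  {K : Type w} [Category.{v} K] {F : K ⥤ C}

/-- The marking of the fibrant replacement `R^m(X)` (with `𝒥 = ∅`): a map
`F(k) ⟶ R(U(X))` is marked iff it is left homotopic to `t_{U(X)}` composed with a
marked map of `X`. -/
def rmMarked (R : C ⥤ C) (t : 𝟭 C ⟶ R) (X : MarkedObj F) :
    ∀ k : K, Set (F.obj k ⟶ R.obj X.pt) :=
  fun k => {h | ∃ e ∈ X.marked k, LeftHomotopic h (e ≫ t.app X.pt)}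

/-- A map of marked objects is a weak equivalence if its underlying map is a weak
equivalence in `C` and `R^m(f)` reflects marked maps. -/
def MWE (R : C ⥤ C) (t : 𝟭 C ⟶ R) {X Y : MarkedObj F} (f : X ⟶ Y) : Prop :=
  ModelStruct.W f.hom ∧
    ∀ (k : K) (h : F.obj k ⟶ R.obj X.pt),
      h ≫ R.map f.hom ∈ rmMarked R t Y k → h ∈ rmMarked R t X k

end MarkedObj

section Aux

open ModelStruct

variable {C : Type u} [Category.{v} C] [ModelStruct C]

attribute [local instance] ModelStruct.w_two_of_three

/-- Retract argument: a map with the RLP against all trivial cofibrations is a fibration. -/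
lemma fib_of_rlp {X Y : C} (f : X ⟶ Y)
    (H : ∀ ⦃A B : C⦄ (i : A ⟶ B), Cof i → W i → HasLiftingProperty i f) : Fib f := by
  obtain ⟨Z, j, p, hjc, hjw, hpf, hcomp⟩ := factorization_trivCof_fib f
  haveI := H j hjc hjw
  have sq : CommSq (𝟙 X) j f p := ⟨by simp [hcomp]⟩
  refine fib_retract f p (Arrow.homMk' (f := f) (g := p) (u := j) (v := 𝟙 Y) (by simp [hcomp]))
    (Arrow.homMk' (f := p) (g := f) (u := sq.lift) (v := 𝟙 Y) (by simp [sq.fac_right])) ?_ hpf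
  apply Arrow.hom_ext <;> simp [sq.fac_left]

/-- Retract argument: a map with the LLP against all trivial fibrations is a cofibration. -/
lemma cof_of_llp {X Y : C} (f : X ⟶ Y)
    (H : ∀ ⦃A B : C⦄ (p : A ⟶ B), Fib p → W p → HasLiftingProperty f p) : Cof f := by
  obtain ⟨Z, i, q, hic, hqf, hqw, hcomp⟩ := factorization_cof_trivFib f
  haveI := H q hqf hqw
  have sq : CommSq i f q (𝟙 Y) := ⟨by simp [hcomp]⟩
  refine cof_retract f i (Arrow.homMk' (f := f) (g := i) (u := 𝟙 X) (v := sq.lift)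
    (by simp [sq.fac_left])) (Arrow.homMk' (f := i) (g := f) (u := 𝟙 X) (v := q)
    (by simp [hcomp])) ?_ hic
  apply Arrow.hom_ext <;> simp [sq.fac_right]

/-- Retract argument: a map with the LLP against all fibrations is a trivial cofibration. -/
lemma trivCof_of_llp {X Y : C} (f : X ⟶ Y)
    (H : ∀ ⦃A B : C⦄ (p : A ⟶ B), Fib p → HasLiftingProperty f p) : Cof f ∧ W f := by
  obtain ⟨Z, i, q, hic, hiw, hqf, hcomp⟩ := factorization_trivCof_fib f
  haveI := H q hqf
  have sq : CommSq i f q (𝟙 Y) := ⟨by simp [hcomp]⟩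
  constructor
  · refine cof_retract f i (Arrow.homMk' (f := f) (g := i) (u := 𝟙 X) (v := sq.lift)
      (by simp [sq.fac_left])) (Arrow.homMk' (f := i) (g := f) (u := 𝟙 X) (v := q)
      (by simp [hcomp])) ?_ hic
    apply Arrow.hom_ext <;> simp [sq.fac_right]
  · refine w_retract f i (Arrow.homMk' (f := f) (g := i) (u := 𝟙 X) (v := sq.lift)
      (by simp [sq.fac_left])) (Arrow.homMk' (f := i) (g := f) (u := 𝟙 X) (v := q)
      (by simp [hcomp])) ?_ hiw
    apply Arrow.hom_ext <;> simp [sq.fac_right]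

/-- Cofibrations are closed under precomposition with isomorphisms. -/
lemma cof_precomp_iso {X X' Y : C} (σ : X ⟶ X') [IsIso σ] {g : X' ⟶ Y} (hg : Cof g) :
    Cof (σ ≫ g) := by
  refine cof_retract (σ ≫ g) g (Arrow.homMk' (u := σ) (v := 𝟙 Y) (by simp))
    (Arrow.homMk' (u := inv σ) (v := 𝟙 Y) (by simp)) ?_ hg
  apply Arrow.hom_ext <;> simp

/-- Fibrations are closed under composition. -/
lemma fib_comp {X Y Z : C} {f : X ⟶ Y} {g : Y ⟶ Z} (hf : Fib f) (hg : Fib g) :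
    Fib (f ≫ g) := by
  refine fib_of_rlp _ (fun A B i hic hiw => ?_)
  haveI := lifting_trivCof_fib i f hic hiw hf
  haveI := lifting_trivCof_fib i g hic hiw hg
  infer_instance

end Aux

section Htpy

open ModelStruct

set_option linter.unusedSectionVars false

variable {C : Type u} [Category.{v} C] [ModelStruct C] [HasLimits C] [HasColimits C]

attribute [local instance] ModelStruct.w_two_of_three

/-- Existence of a good cylinder object with fibrant projection. -/
lemma exists_goodCyl (A : C) :
    ∃ (Cl : C) (i₀ i₁ : A ⟶ Cl) (w : Cl ⟶ A),
      Cof (coprod.desc i₀ i₁) ∧ Fib w ∧ W w ∧ i₀ ≫ w = 𝟙 A ∧ i₁ ≫ w = 𝟙 A := by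
  obtain ⟨Cl, i, w, hic, hwf, hww, hcomp⟩ :=
    factorization_cof_trivFib (coprod.desc (𝟙 A) (𝟙 A))
  refine ⟨Cl, coprod.inl ≫ i, coprod.inr ≫ i, w, ?_, hwf, hww, ?_, ?_⟩
  · have : coprod.desc (coprod.inl ≫ i) (coprod.inr ≫ i) = i := by
      apply coprod.hom_ext <;> simp
    rw [this]; exact hic
  · have := congrArg (fun z => coprod.inl ≫ z) hcomp
    simpa using this
  · have := congrArg (fun z => coprod.inr ≫ z) hcomp
    simpa using this

lemma LeftHomotopic.comp_right {X Y Z : C} {a b : X ⟶ Y} (h : LeftHomotopic a b) (u : Y ⟶ Z) :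
    LeftHomotopic (a ≫ u) (b ≫ u) := by
  obtain ⟨Cl, i₀, i₁, w, H, hc, hw, h₀, h₁, ha, hb⟩ := h
  exact ⟨Cl, i₀, i₁, w, H ≫ u, hc, hw, h₀, h₁, by rw [← Category.assoc, ha],
    by rw [← Category.assoc, hb]⟩

lemma LeftHomotopic.symm {X Y : C} {a b : X ⟶ Y} (h : LeftHomotopic a b) :
    LeftHomotopic b a := by
  obtain ⟨Cl, i₀, i₁, w, H, hc, hw, h₀, h₁, ha, hb⟩ := h
  refine ⟨Cl, i₁, i₀, w, H, ?_, hw, h₁, h₀, hb, ha⟩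
  have : coprod.desc i₁ i₀ = (coprod.braiding X X).hom ≫ coprod.desc i₀ i₁ := by
    apply coprod.hom_ext <;> simp [coprod.braiding]
  rw [this]; exact cof_precomp_iso _ hc

/-- Two maps which agree after composing with a trivial fibration are left homotopic. -/
lemma leftHomotopic_of_eq_comp {A E B : C} {v : E ⟶ B} (hvf : Fib v) (hvw : W v)
    {a b : A ⟶ E} (h : a ≫ v = b ≫ v) : LeftHomotopic a b := by
  obtain ⟨Cl, i₀, i₁, w, hc, hwf, hww, h₀, h₁⟩ := exists_goodCyl A
  haveI := lifting_cof_trivFib _ v hc hvf hvw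
  have sq : CommSq (coprod.desc a b) (coprod.desc i₀ i₁) v (w ≫ a ≫ v) :=
    ⟨by apply coprod.hom_ext <;>
        simp [reassoc_of% h₀, reassoc_of% h₁, h]⟩
  refine ⟨Cl, i₀, i₁, w, sq.lift, hc, hww, h₀, h₁, ?_, ?_⟩
  · have h' := congrArg (fun z => coprod.inl ≫ z) sq.fac_left
    rwa [← Category.assoc, coprod.inl_desc, coprod.inl_desc] at h'
  · have h' := congrArg (fun z => coprod.inr ≫ z) sq.fac_left
    rwa [← Category.assoc, coprod.inr_desc, coprod.inr_desc] at h' 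

/-- For a cofibrant `A`, the left inclusion into a coproduct lifts against trivial
fibrations. -/
lemma llp_inl {A : C} (hA : Cof (initial.to A)) ⦃E B : C⦄ (p : E ⟶ B)
    (hpf : Fib p) (hpw : W p) : HasLiftingProperty (coprod.inl : A ⟶ A ⨿ A) p := by
  constructor
  intro f g sq
  haveI := lifting_cof_trivFib _ p hA hpf hpw
  have sq2 : CommSq (initial.to E) (initial.to A) p (coprod.inr ≫ g) :=
    ⟨by apply initial.hom_ext⟩
  exact CommSq.HasLift.mk' ⟨coprod.desc f sq2.lift, by simp, by
    apply coprod.hom_ext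
    · simpa using sq.w
    · simp [sq2.fac_right]⟩

/-- For cofibrant `A`, the end inclusion `i₀` of a good cylinder is a cofibration. -/
lemma cof_end {A Cl : C} (hA : Cof (initial.to A)) {i₀ i₁ : A ⟶ Cl}
    (hc : Cof (coprod.desc i₀ i₁)) : Cof i₀ := by
  refine cof_of_llp _ (fun E B p hpf hpw => ?_)
  haveI := llp_inl hA p hpf hpw
  haveI := lifting_cof_trivFib _ p hc hpf hpw
  have : HasLiftingProperty (coprod.inl ≫ coprod.desc i₀ i₁) p := inferInstance
  rwa [coprod.inl_desc] at this

end Htpy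

section Trans

open ModelStruct

set_option linter.unusedSectionVars false

variable {C : Type u} [Category.{v} C] [ModelStruct C] [HasLimits C] [HasColimits C]

attribute [local instance] ModelStruct.w_two_of_three

/-- Transitivity of left homotopy for maps out of a cofibrant object. -/
lemma LeftHomotopic.trans' {A E : C} (hA : Cof (initial.to A)) {a b c : A ⟶ E}
    (h₁ : LeftHomotopic a b) (h₂ : LeftHomotopic b c) : LeftHomotopic a c := by
  obtain ⟨Cl₁, i₀, i₁, w₁, H₁, hc₁, hw₁, hi₀, hi₁, ha, hb⟩ := h₁
  obtain ⟨Cl₂, j₀, j₁, w₂, H₂, hc₂, hw₂, hj₀, hj₁, hb', hc⟩ := h₂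
  -- glue the cylinders along the middle copy of `A`
  let Cl₃ := pushout i₁ j₀
  let k₀ : A ⟶ Cl₃ := i₀ ≫ pushout.inl _ _
  let k₁ : A ⟶ Cl₃ := j₁ ≫ pushout.inr _ _
  have hglue_w : i₁ ≫ w₁ = j₀ ≫ w₂ := by rw [hi₁, hj₀]
  have hglue_H : i₁ ≫ H₁ = j₀ ≫ H₂ := by rw [hb, hb']
  -- `j₀` is a trivial cofibration
  have hwj₀ : W j₀ := by
    have : W (j₀ ≫ w₂) := by rw [hj₀]; exact w_of_iso _ inferInstance
    exact W.of_postcomp j₀ w₂ hw₂ this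
  have hcj₀ : Cof j₀ := cof_end hA hc₂
  have hci₀ : Cof i₀ := cof_end hA hc₁
  -- `pushout.inl` is a weak equivalence (cobase change of a trivial cofibration)
  have hinl : Cof (pushout.inl i₁ j₀) ∧ W (pushout.inl i₁ j₀) := by
    refine trivCof_of_llp _ (fun X Y p hpf => ?_)
    constructor
    intro f g sq
    haveI := lifting_trivCof_fib j₀ p hcj₀ hwj₀ hpf
    have sq2 : CommSq (i₁ ≫ f) j₀ p (pushout.inr i₁ j₀ ≫ g) :=
      ⟨by rw [← Category.assoc, ← pushout.condition, Category.assoc, sq.w, Category.assoc]⟩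
    refine CommSq.HasLift.mk' ⟨pushout.desc f sq2.lift sq2.fac_left.symm, by simp, ?_⟩
    apply pushout.hom_ext
    · simpa using sq.w
    · simpa using sq2.fac_right
  -- the glued retraction and its weak-equivalence property
  refine ⟨Cl₃, k₀, k₁, pushout.desc w₁ w₂ hglue_w, pushout.desc H₁ H₂ hglue_H, ?_, ?_, ?_, ?_, ?_, ?_⟩
  · -- the glued end inclusion is a cofibration
    refine cof_of_llp _ (fun X Y p hpf hpw => ?_)
    constructor
    intro f g sq
    haveI := lifting_cof_trivFib i₀ p hci₀ hpf hpw
    haveI := lifting_cof_trivFib _ p hc₂ hpf hpw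
    have sqA : CommSq (coprod.inl ≫ f) i₀ p (pushout.inl i₁ j₀ ≫ g) :=
      ⟨by simpa [k₀] using congrArg (fun z => coprod.inl ≫ z) sq.w⟩
    have sqB : CommSq (coprod.desc (i₁ ≫ sqA.lift) (coprod.inr ≫ f)) (coprod.desc j₀ j₁) p
        (pushout.inr i₁ j₀ ≫ g) := ⟨by
      apply coprod.hom_ext
      · simp [sqA.fac_right, pushout.condition_assoc]
      · simpa [k₁] using congrArg (fun z => coprod.inr ≫ z) sq.w⟩
    have hj₀L : j₀ ≫ sqB.lift = i₁ ≫ sqA.lift := by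
      have h' := congrArg (fun z => coprod.inl ≫ z) sqB.fac_left
      rwa [← Category.assoc, coprod.inl_desc, coprod.inl_desc] at h'
    have hj₁L : j₁ ≫ sqB.lift = coprod.inr ≫ f := by
      have h' := congrArg (fun z => coprod.inr ≫ z) sqB.fac_left
      rwa [← Category.assoc, coprod.inr_desc, coprod.inr_desc] at h'
    refine CommSq.HasLift.mk' ⟨pushout.desc sqA.lift sqB.lift hj₀L.symm, ?_, ?_⟩
    · apply coprod.hom_ext
      · simp [k₀, sqA.fac_left]
      · simp [k₁, hj₁L]
    · apply pushout.hom_ext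
      · simpa using sqA.fac_right
      · simpa using sqB.fac_right
  · -- the glued projection is a weak equivalence
    have : W (pushout.inl i₁ j₀ ≫ pushout.desc w₁ w₂ hglue_w) := by
      rw [pushout.inl_desc]; exact hw₁
    exact W.of_precomp _ _ hinl.2 this
  · simp [k₀, Category.assoc, hi₀]
  · simp [k₁, Category.assoc, hj₁]
  · simp [k₀, Category.assoc, ha]
  · simp [k₁, Category.assoc, hc]

end Trans

section KenBrown

open ModelStruct

set_option linter.unusedSectionVars false
set_option linter.unnecessarySimpa false

variable {C : Type u} [Category.{v} C] [ModelStruct C] [HasLimits C] [HasColimits C]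

attribute [local instance] ModelStruct.w_two_of_three

lemma fib_prod_fst {Y X : C} (hX : Fib (terminal.from X)) :
    Fib (prod.fst : Y ⨯ X ⟶ Y) := by
  refine fib_of_rlp _ (fun A' B' i hic hiw => ?_)
  constructor
  intro f g sq
  haveI := lifting_trivCof_fib i (terminal.from X) hic hiw hX
  have sq2 : CommSq (f ≫ prod.snd) i (terminal.from X) (terminal.from B') :=
    ⟨by apply terminal.hom_ext⟩
  refine CommSq.HasLift.mk' ⟨prod.lift g sq2.lift, ?_, by simp⟩
  apply Limits.prod.hom_ext
  · simpa using sq.w.symm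
  · simpa using sq2.fac_left

lemma fib_prod_snd {Y X : C} (hY : Fib (terminal.from Y)) :
    Fib (prod.snd : Y ⨯ X ⟶ X) := by
  refine fib_of_rlp _ (fun A' B' i hic hiw => ?_)
  constructor
  intro f g sq
  haveI := lifting_trivCof_fib i (terminal.from Y) hic hiw hY
  have sq2 : CommSq (f ≫ prod.fst) i (terminal.from Y) (terminal.from B') :=
    ⟨by apply terminal.hom_ext⟩
  refine CommSq.HasLift.mk' ⟨prod.lift sq2.lift g, ?_, by simp⟩
  apply Limits.prod.hom_ext
  · simpa using sq2.fac_left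
  · simpa using sq.w.symm

/-- Ken Brown-style lemma: a weak equivalence between fibrant objects is surjective
up to left homotopy on maps from a cofibrant object. -/
lemma exists_lift_upto {A X Y : C} (hA : Cof (initial.to A)) (q : X ⟶ Y) (hq : W q)
    (hX : Fib (terminal.from X)) (hY : Fib (terminal.from Y)) (h : A ⟶ Y) :
    ∃ h' : A ⟶ X, LeftHomotopic (h' ≫ q) h := by
  obtain ⟨P, s, phat, hsc, hsw, hpf, hcomp⟩ :=
    factorization_trivCof_fib (prod.lift q (𝟙 X) : X ⟶ Y ⨯ X)
  have hsp : s ≫ phat ≫ prod.fst = q := by rw [← Category.assoc, hcomp]; simp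
  have hsπ : s ≫ phat ≫ prod.snd = 𝟙 X := by rw [← Category.assoc, hcomp]; simp
  have hpFib : Fib (phat ≫ prod.fst) := fib_comp hpf (fib_prod_fst hX)
  have hpW : W (phat ≫ prod.fst) := by
    refine W.of_precomp s _ hsw ?_
    rw [hsp]; exact hq
  have hπFib : Fib (phat ≫ prod.snd) := fib_comp hpf (fib_prod_snd hY)
  have hπW : W (phat ≫ prod.snd) := by
    refine W.of_precomp s _ hsw ?_
    rw [hsπ]; exact w_of_iso _ inferInstance
  -- lift `h` along the trivial fibration `phat ≫ prod.fst`
  haveI := lifting_cof_trivFib (initial.to A) (phat ≫ prod.fst) hA hpFib hpW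
  have sq : CommSq (initial.to P) (initial.to A) (phat ≫ prod.fst) h :=
    ⟨by apply initial.hom_ext⟩
  set u : A ⟶ P := sq.lift with hu
  have hup : u ≫ phat ≫ prod.fst = h := sq.fac_right
  refine ⟨u ≫ phat ≫ prod.snd, ?_⟩
  have heq : ((u ≫ phat ≫ prod.snd) ≫ s) ≫ (phat ≫ prod.snd) = u ≫ (phat ≫ prod.snd) := by
    rw [Category.assoc, hsπ, Category.comp_id]
  have h1 : LeftHomotopic ((u ≫ phat ≫ prod.snd) ≫ s) u :=
    leftHomotopic_of_eq_comp hπFib hπW heq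
  have h2 := h1.comp_right (phat ≫ prod.fst)
  rw [hup] at h2
  have : ((u ≫ phat ≫ prod.snd) ≫ s) ≫ phat ≫ prod.fst = (u ≫ phat ≫ prod.snd) ≫ q := by
    rw [Category.assoc, hsp]
  rwa [this] at h2

/-- `R` preserves weak equivalences. -/
lemma w_Rmap (R : C ⥤ C) (t : 𝟭 C ⟶ R) (hRwe : ∀ Z : C, W (t.app Z))
    {X Y : C} (f : X ⟶ Y) (hf : W f) : W (R.map f) := by
  have hnat : f ≫ t.app Y = t.app X ≫ R.map f := by simpa using t.naturality f
  have : W (f ≫ t.app Y) := W.comp_mem _ _ hf (hRwe Y)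
  rw [hnat] at this
  exact W.of_precomp _ _ (hRwe X) this

end KenBrown

open MarkedObj in
/-- given a fibrant replacement functor `(R, t)` on a model category
`C` and a functor `F : K ⥤ C` landing in cofibrant objects, the class of weak
equivalences of marked objects (maps whose underlying map is a weak equivalence and
whose marked fibrant replacement reflects marked maps) satisfies 2-out-of-3. -/
theorem markedObj_weakEquiv_twoOutOfThree {C : Type u} [Category.{v} C]
    [HasLimits C] [HasColimits C] [ModelStruct C]
    {K : Type w} [Category.{v} K] (F : K ⥤ C)
    (hF : ∀ k : K, Cofibrant (F.obj k))
    (R : C ⥤ C) (t : 𝟭 C ⟶ R)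
    (hRfib : ∀ X : C, Fibrant (R.obj X))
    (hRwe : ∀ X : C, ModelStruct.W (t.app X))
    {X Y Z : MarkedObj F} (f : X ⟶ Y) (g : Y ⟶ Z) :
    (MWE R t f → MWE R t g → MWE R t (f ≫ g)) ∧
    (MWE R t g → MWE R t (f ≫ g) → MWE R t f) ∧
    (MWE R t f → MWE R t (f ≫ g) → MWE R t g) := by
  haveI := ModelStruct.w_two_of_three (C := C)
  have pres : ∀ {P Q : MarkedObj F} (u : P ⟶ Q) (k : K) (m : F.obj k ⟶ R.obj P.pt),
      m ∈ rmMarked R t P k → m ≫ R.map u.hom ∈ rmMarked R t Q k := by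
    intro P Q u k m hm
    obtain ⟨e, he, hh⟩ := hm
    refine ⟨e ≫ u.hom, u.pres he, ?_⟩
    have hcr := hh.comp_right (R.map u.hom)
    have hnat : (e ≫ t.app P.pt) ≫ R.map u.hom = (e ≫ u.hom) ≫ t.app Q.pt := by
      rw [Category.assoc, Category.assoc, ← t.naturality u.hom]; simp
    rwa [hnat] at hcr
  refine ⟨?_, ?_, ?_⟩
  · rintro ⟨hfw, hfr⟩ ⟨hgw, hgr⟩
    refine ⟨ModelStruct.W.comp_mem _ _ hfw hgw, ?_⟩
    intro k h hh
    rw [comp_hom, R.map_comp, ← Category.assoc] at hh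
    exact hfr k h (hgr k _ hh)
  · rintro ⟨hgw, hgr⟩ ⟨hfgw, hfgr⟩
    refine ⟨ModelStruct.W.of_postcomp f.hom g.hom hgw hfgw, ?_⟩
    intro k h hh
    apply hfgr k h
    rw [comp_hom, R.map_comp, ← Category.assoc]
    exact pres g k _ hh
  · rintro ⟨hfw, hfr⟩ ⟨hfgw, hfgr⟩
    refine ⟨ModelStruct.W.of_precomp f.hom g.hom hfw hfgw, ?_⟩
    intro k h hh
    have hA : ModelStruct.Cof (initial.to (F.obj k)) := hF k
    have hq : ModelStruct.W (R.map f.hom) := w_Rmap R t hRwe f.hom hfw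
    obtain ⟨h', hh'⟩ := exists_lift_upto hA (R.map f.hom) hq (hRfib X.pt) (hRfib Y.pt) h
    obtain ⟨e, he, hhe⟩ := hh
    have hz : h' ≫ R.map (f ≫ g).hom ∈ rmMarked R t Z k := by
      refine ⟨e, he, ?_⟩
      have l1 := hh'.comp_right (R.map g.hom)
      have l2 := LeftHomotopic.trans' hA l1 hhe
      rw [comp_hom, R.map_comp, ← Category.assoc]
      exact l2
    obtain ⟨e₀, he₀, hx0⟩ := hfgr k h' hz
    refine ⟨e₀ ≫ f.hom, f.pres he₀, ?_⟩
    have l3 := hx0.comp_right (R.map f.hom)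
    have hnat : (e₀ ≫ t.app X.pt) ≫ R.map f.hom = (e₀ ≫ f.hom) ≫ t.app Y.pt := by
      rw [Category.assoc, Category.assoc, ← t.naturality f.hom]; simp
    rw [hnat] at l3
    exact LeftHomotopic.trans' hA hh'.symm l3
end

section
/- Let C be a left proper model category, K a small category, F : K → C a functor landing in cofibrant objects, and equip the category of K-marked objects with cofibrations the maps whose underlying maps are cofibrations and weak equivalences as defined via marked fibrant replacement (with J = ∅). Then the pushout of a weak equivalence of marked objects that is a trivial fibration on underlying objects, along a cofibration of marked objects, is a weak equivalence of marked objects. -/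
open CategoryTheory Limits

universe w v u

variable {C : Type u} [Category.{v} C]

section AuxModel

variable {C : Type u} [Category.{v} C] [ModelStruct C]

lemma retract_of_section' {P : MorphismProperty C} (hP : RetractClosed P)
    {A B Z : C} (g : A ⟶ B) (j : A ⟶ Z) (r : Z ⟶ B) (s : B ⟶ Z)
    (hfac : j ≫ r = g) (hjs : g ≫ s = j) (hsr : s ≫ r = 𝟙 B) (hj : P j) : P g := by
  refine hP g j (Arrow.homMk (u := 𝟙 A) (v := s) (by simp [hjs]))
    (Arrow.homMk (u := 𝟙 A) (v := r) (by simp [hfac])) ?_ hj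
  apply Arrow.hom_ext <;> simp [hsr]

lemma cof_of_llp_s19 {A B : C} (g : A ⟶ B)
    (h : ∀ ⦃U V : C⦄ (r : U ⟶ V), ModelStruct.Fib r → ModelStruct.W r →
      HasLiftingProperty g r) : ModelStruct.Cof g := by
  obtain ⟨Z, j, r, hj, hr, hrw, hfac⟩ := ModelStruct.factorization_cof_trivFib g
  haveI := h r hr hrw
  have sq : CommSq j g r (𝟙 B) := ⟨by simp [hfac]⟩
  exact retract_of_section' ModelStruct.cof_retract g j r sq.lift hfac sq.fac_left
    sq.fac_right hj

lemma trivCof_of_llp_s19 {A B : C} (g : A ⟶ B)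
    (h : ∀ ⦃U V : C⦄ (r : U ⟶ V), ModelStruct.Fib r → HasLiftingProperty g r) :
    ModelStruct.Cof g ∧ ModelStruct.W g := by
  obtain ⟨Z, j, r, hj, hjw, hr, hfac⟩ := ModelStruct.factorization_trivCof_fib g
  haveI := h r hr
  have sq : CommSq j g r (𝟙 B) := ⟨by simp [hfac]⟩
  exact ⟨retract_of_section' ModelStruct.cof_retract g j r sq.lift hfac sq.fac_left
      sq.fac_right hj,
    retract_of_section' ModelStruct.w_retract g j r sq.lift hfac sq.fac_left
      sq.fac_right hjw⟩

lemma exists_lift_of_cofibrant [HasInitial C] {A U V : C} (hA : Cofibrant A)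
    {r : U ⟶ V} (hr : ModelStruct.Fib r) (hrw : ModelStruct.W r) (g : A ⟶ V) :
    ∃ l : A ⟶ U, l ≫ r = g := by
  haveI := ModelStruct.lifting_cof_trivFib (initial.to A) r hA hr hrw
  have sq : CommSq (initial.to U) (initial.to A) r g := ⟨initial.hom_ext _ _⟩
  exact ⟨sq.lift, sq.fac_right⟩

lemma leftHomotopic_refl [HasBinaryCoproducts C] {U V : C} (f : U ⟶ V) :
    LeftHomotopic f f := by
  obtain ⟨D, i, r, hi, hr, hrw, hfac⟩ :=
    ModelStruct.factorization_cof_trivFib (coprod.desc (𝟙 U) (𝟙 U))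
  have h0 : (coprod.inl ≫ i) ≫ r = 𝟙 U := by rw [Category.assoc, hfac, coprod.inl_desc]
  have h1 : (coprod.inr ≫ i) ≫ r = 𝟙 U := by rw [Category.assoc, hfac, coprod.inr_desc]
  refine ⟨D, coprod.inl ≫ i, coprod.inr ≫ i, r, r ≫ f, ?_, hrw, h0, h1, ?_, ?_⟩
  · have : coprod.desc (coprod.inl ≫ i) (coprod.inr ≫ i) = i := by
      apply coprod.hom_ext <;> simp only [coprod.inl_desc, coprod.inr_desc]
    rw [this]; exact hi
  · rw [← Category.assoc, h0, Category.id_comp]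
  · rw [← Category.assoc, h1, Category.id_comp]

lemma LeftHomotopic.comp_right' [HasBinaryCoproducts C] {U V S : C} {f g : U ⟶ V}
    (h : LeftHomotopic f g) (e : V ⟶ S) : LeftHomotopic (f ≫ e) (g ≫ e) := by
  obtain ⟨D, i₀, i₁, w, H, hc, hw, h0, h1, hf, hg⟩ := h
  exact ⟨D, i₀, i₁, w, H ≫ e, hc, hw, h0, h1, by rw [← Category.assoc, hf],
    by rw [← Category.assoc, hg]⟩

lemma leftHomotopic_cancel [HasBinaryCoproducts C] [HasTerminal C] {A P Q : C}
    {a b : A ⟶ P} {v : P ⟶ Q} (hv : ModelStruct.W v) (hP : Fibrant P)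
    (hab : LeftHomotopic (a ≫ v) (b ≫ v)) : LeftHomotopic a b := by
  haveI := ModelStruct.w_two_of_three (C := C)
  obtain ⟨M, j, r, hj, hjw, hr, hfac⟩ := ModelStruct.factorization_trivCof_fib v
  have hrw : ModelStruct.W r :=
    MorphismProperty.of_precomp _ j r hjw (by rw [hfac]; exact hv)
  haveI := ModelStruct.lifting_trivCof_fib j (terminal.from P) hj hjw hP
  have sqs : CommSq (𝟙 P) j (terminal.from P) (terminal.from M) :=
    ⟨terminal.hom_ext _ _⟩
  obtain ⟨D, i₀, i₁, w, H, hc, hw, e0, e1, ea, eb⟩ := hab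
  haveI := ModelStruct.lifting_cof_trivFib (coprod.desc i₀ i₁) r hc hr hrw
  have sq2 : CommSq (coprod.desc (a ≫ j) (b ≫ j)) (coprod.desc i₀ i₁) r H :=
    ⟨by apply coprod.hom_ext <;> simp [ea, eb, hfac]⟩
  have h1 : i₀ ≫ sq2.lift = a ≫ j := by
    have := congrArg (fun t => coprod.inl ≫ t) sq2.fac_left
    simpa only [coprod.inl_desc_assoc, coprod.inl_desc] using this
  have h2 : i₁ ≫ sq2.lift = b ≫ j := by
    have := congrArg (fun t => coprod.inr ≫ t) sq2.fac_left
    simpa only [coprod.inr_desc_assoc, coprod.inr_desc] using this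
  refine ⟨D, i₀, i₁, w, sq2.lift ≫ sqs.lift, hc, hw, e0, e1, ?_, ?_⟩
  · rw [← Category.assoc, h1, Category.assoc, sqs.fac_left, Category.comp_id]
  · rw [← Category.assoc, h2, Category.assoc, sqs.fac_left, Category.comp_id]

lemma cyl_endpoint_lift [HasBinaryCoproducts C] [HasInitial C] {A D U V : C}
    (hA : Cofibrant A) {i₀ i₁ : A ⟶ D} (hc : ModelStruct.Cof (coprod.desc i₀ i₁))
    {r : U ⟶ V} (hr : ModelStruct.Fib r) (hrw : ModelStruct.W r)
    (a : A ⟶ U) (v : D ⟶ V) (hcomm : a ≫ r = i₀ ≫ v) :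
    ∃ L : D ⟶ U, i₀ ≫ L = a ∧ L ≫ r = v := by
  obtain ⟨c, hcc⟩ := exists_lift_of_cofibrant hA hr hrw (i₁ ≫ v)
  haveI := ModelStruct.lifting_cof_trivFib (coprod.desc i₀ i₁) r hc hr hrw
  have sq : CommSq (coprod.desc a c) (coprod.desc i₀ i₁) r v :=
    ⟨by apply coprod.hom_ext <;> simp [hcomm, hcc]⟩
  refine ⟨sq.lift, ?_, sq.fac_right⟩
  have := congrArg (fun t => coprod.inl ≫ t) sq.fac_left
  simpa only [coprod.inl_desc_assoc, coprod.inl_desc] using this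

lemma leftHomotopic_trans [HasBinaryCoproducts C] [HasInitial C] [HasPushouts C]
    {A P : C} (hA : Cofibrant A) {f g h : A ⟶ P}
    (H₁ : LeftHomotopic f g) (H₂ : LeftHomotopic g h) : LeftHomotopic f h := by
  haveI := ModelStruct.w_two_of_three (C := C)
  obtain ⟨D, i₀, i₁, w, H, hc, hw, e0, e1, ef, eg⟩ := H₁
  obtain ⟨D', i₀', i₁', w', H', hc', hw', e0', e1', eg', eh⟩ := H₂
  have wI : ModelStruct.W (𝟙 A) := ModelStruct.w_of_iso _ inferInstance
  have w_i₀' : ModelStruct.W i₀' :=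
    MorphismProperty.of_postcomp _ i₀' w' hw' (by rw [e0']; exact wI)
  have cof_i₀' : ModelStruct.Cof i₀' := by
    apply cof_of_llp_s19
    intro U V r hr hrw
    constructor
    intro a v sq
    obtain ⟨L, hL1, hL2⟩ := cyl_endpoint_lift hA hc' hr hrw a v sq.w
    exact ⟨⟨⟨L, hL1, hL2⟩⟩⟩
  have cond_w : i₁ ≫ w = i₀' ≫ w' := by rw [e1, e0']
  have cond_H : i₁ ≫ H = i₀' ≫ H' := by rw [eg, eg']
  have hinl : ModelStruct.Cof (pushout.inl i₁ i₀') ∧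
      ModelStruct.W (pushout.inl i₁ i₀') := by
    apply trivCof_of_llp_s19
    intro U V rf hrf
    haveI := ModelStruct.lifting_trivCof_fib i₀' rf cof_i₀' w_i₀' hrf
    constructor
    intro uu vv sqq
    have sq2 : CommSq (i₁ ≫ uu) i₀' rf (pushout.inr i₁ i₀' ≫ vv) :=
      ⟨by rw [Category.assoc, sqq.w, ← Category.assoc, pushout.condition,
          Category.assoc]⟩
    refine ⟨⟨⟨pushout.desc uu sq2.lift sq2.fac_left.symm, pushout.inl_desc _ _ _, ?_⟩⟩⟩
    apply pushout.hom_ext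
    · rw [← Category.assoc, pushout.inl_desc, sqq.w]
    · rw [← Category.assoc, pushout.inr_desc, sq2.fac_right]
  refine ⟨pushout i₁ i₀', i₀ ≫ pushout.inl i₁ i₀', i₁' ≫ pushout.inr i₁ i₀',
    pushout.desc w w' cond_w, pushout.desc H H' cond_H, ?_, ?_, ?_, ?_, ?_, ?_⟩
  · -- cofibration of the glued cylinder inclusion
    apply cof_of_llp_s19
    intro U V r hr hrw
    constructor
    intro uu vv sqq
    have hcomm1 : (coprod.inl ≫ uu) ≫ r = i₀ ≫ (pushout.inl i₁ i₀' ≫ vv) := by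
      have := congrArg (fun t => coprod.inl ≫ t) sqq.w
      simpa only [coprod.inl_desc_assoc, coprod.inl_desc, Category.assoc] using this
    obtain ⟨l₁, hl₁a, hl₁b⟩ := cyl_endpoint_lift hA hc hr hrw
      (coprod.inl ≫ uu) (pushout.inl i₁ i₀' ≫ vv) hcomm1
    haveI := ModelStruct.lifting_cof_trivFib (coprod.desc i₀' i₁') r hc' hr hrw
    have hcomm2 : (coprod.inr ≫ uu) ≫ r = i₁' ≫ (pushout.inr i₁ i₀' ≫ vv) := by
      have := congrArg (fun t => coprod.inr ≫ t) sqq.w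
      simpa only [coprod.inr_desc_assoc, coprod.inr_desc, Category.assoc] using this
    have sq2 : CommSq (coprod.desc (i₁ ≫ l₁) (coprod.inr ≫ uu))
        (coprod.desc i₀' i₁') r (pushout.inr i₁ i₀' ≫ vv) := by
      constructor
      apply coprod.hom_ext
      · simp only [coprod.inl_desc_assoc, coprod.inl_desc, Category.assoc]
        rw [hl₁b, ← Category.assoc, pushout.condition, Category.assoc]
      · simp only [coprod.inr_desc_assoc, coprod.inr_desc, Category.assoc]
        simpa using hcomm2
    have hglue : i₁ ≫ l₁ = i₀' ≫ sq2.lift := by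
      have := congrArg (fun t => coprod.inl ≫ t) sq2.fac_left
      simpa only [coprod.inl_desc_assoc, coprod.inl_desc] using this.symm
    have h4 : i₁' ≫ sq2.lift = coprod.inr ≫ uu := by
      have := congrArg (fun t => coprod.inr ≫ t) sq2.fac_left
      simpa only [coprod.inr_desc_assoc, coprod.inr_desc] using this
    refine ⟨⟨⟨pushout.desc l₁ sq2.lift hglue, ?_, ?_⟩⟩⟩
    · apply coprod.hom_ext
      · simp only [coprod.inl_desc_assoc, Category.assoc, pushout.inl_desc]
        exact hl₁a
      · simp only [coprod.inr_desc_assoc, Category.assoc, pushout.inr_desc]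
        exact h4
    · apply pushout.hom_ext
      · rw [← Category.assoc, pushout.inl_desc, hl₁b]
      · rw [← Category.assoc, pushout.inr_desc, sq2.fac_right]
  · exact MorphismProperty.of_precomp _ (pushout.inl i₁ i₀')
      (pushout.desc w w' cond_w) hinl.2 (by rw [pushout.inl_desc]; exact hw)
  · rw [Category.assoc, pushout.inl_desc]; exact e0
  · rw [Category.assoc, pushout.inr_desc]; exact e1'
  · rw [Category.assoc, pushout.inl_desc]; exact ef
  · rw [Category.assoc, pushout.inr_desc]; exact eh

end AuxModel

section AuxPushout

variable {C : Type u} [Category.{v} C] {K : Type w} [Category.{v} K] {F : K ⥤ C}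

/-- The explicit pushout of marked objects, with the generated marking. -/
noncomputable def pushMarked [HasPushouts C] {X Y Z : MarkedObj F}
    (f : X ⟶ Y) (p : X ⟶ Z) : MarkedObj F where
  pt := pushout f.hom p.hom
  marked k := {e | (∃ m ∈ Y.marked k, m ≫ pushout.inl f.hom p.hom = e) ∨
      ∃ m ∈ Z.marked k, m ≫ pushout.inr f.hom p.hom = e}
  comp_mem := by
    rintro k k' g e (⟨m, hm, rfl⟩ | ⟨m, hm, rfl⟩)
    · exact Or.inl ⟨F.map g ≫ m, Y.comp_mem g hm, Category.assoc _ _ _⟩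
    · exact Or.inr ⟨F.map g ≫ m, Z.comp_mem g hm, Category.assoc _ _ _⟩

noncomputable def pushMarkedInl [HasPushouts C] {X Y Z : MarkedObj F}
    (f : X ⟶ Y) (p : X ⟶ Z) : Y ⟶ pushMarked f p :=
  ⟨pushout.inl f.hom p.hom, fun k e he => Or.inl ⟨e, he, rfl⟩⟩

noncomputable def pushMarkedInr [HasPushouts C] {X Y Z : MarkedObj F}
    (f : X ⟶ Y) (p : X ⟶ Z) : Z ⟶ pushMarked f p :=
  ⟨pushout.inr f.hom p.hom, fun k e he => Or.inr ⟨e, he, rfl⟩⟩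

lemma marked_pushout_char [HasPushouts C] {X Y Z T : MarkedObj F}
    {f : X ⟶ Y} {p : X ⟶ Z} {q : Y ⟶ T} {f' : Z ⟶ T}
    (sq : IsPushout f p q f') :
    (∃ u : T.pt ⟶ pushout f.hom p.hom, IsIso u ∧
        f'.hom ≫ u = pushout.inr f.hom p.hom) ∧
      ∀ ⦃k : K⦄ ⦃e : F.obj k ⟶ T.pt⦄, e ∈ T.marked k →
        (∃ m ∈ Y.marked k, m ≫ q.hom = e) ∨ ∃ m ∈ Z.marked k, m ≫ f'.hom = e := by
  have wsq : f.hom ≫ q.hom = p.hom ≫ f'.hom := congrArg MarkedObj.Hom.hom sq.w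
  let u : T ⟶ pushMarked f p := sq.desc (pushMarkedInl f p) (pushMarkedInr f p)
    (MarkedObj.Hom.ext pushout.condition)
  have hqu : q ≫ u = pushMarkedInl f p := sq.inl_desc _ _ _
  have hfu : f' ≫ u = pushMarkedInr f p := sq.inr_desc _ _ _
  have hqu' : q.hom ≫ u.hom = pushout.inl f.hom p.hom :=
    congrArg MarkedObj.Hom.hom hqu
  have hfu' : f'.hom ≫ u.hom = pushout.inr f.hom p.hom :=
    congrArg MarkedObj.Hom.hom hfu
  let v : pushMarked f p ⟶ T := ⟨pushout.desc q.hom f'.hom wsq, by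
    rintro k e (⟨m, hm, rfl⟩ | ⟨m, hm, rfl⟩)
    · show (m ≫ pushout.inl f.hom p.hom) ≫ pushout.desc q.hom f'.hom wsq ∈ T.marked k
      rw [Category.assoc, pushout.inl_desc]; exact q.pres hm
    · show (m ≫ pushout.inr f.hom p.hom) ≫ pushout.desc q.hom f'.hom wsq ∈ T.marked k
      rw [Category.assoc, pushout.inr_desc]; exact f'.pres hm⟩
  have hvu : pushout.desc q.hom f'.hom wsq ≫ u.hom = 𝟙 _ := by
    apply pushout.hom_ext
    · rw [← Category.assoc, pushout.inl_desc, hqu']; exact (Category.comp_id _).symm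
    · rw [← Category.assoc, pushout.inr_desc, hfu']; exact (Category.comp_id _).symm
  have huv : u ≫ v = 𝟙 T := by
    apply sq.hom_ext
    · rw [← Category.assoc, hqu, Category.comp_id]
      exact MarkedObj.Hom.ext (pushout.inl_desc _ _ _)
    · rw [← Category.assoc, hfu, Category.comp_id]
      exact MarkedObj.Hom.ext (pushout.inr_desc _ _ _)
  have hu_v : u.hom ≫ pushout.desc q.hom f'.hom wsq = 𝟙 T.pt :=
    congrArg MarkedObj.Hom.hom huv
  refine ⟨⟨u.hom, ⟨⟨pushout.desc q.hom f'.hom wsq, hu_v, hvu⟩⟩, hfu'⟩, ?_⟩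
  intro k e he
  rcases u.pres he with ⟨m, hm, hme⟩ | ⟨m, hm, hme⟩
  · refine Or.inl ⟨m, hm, ?_⟩
    have h1 : m ≫ q.hom = (e ≫ u.hom) ≫ pushout.desc q.hom f'.hom wsq := by
      rw [← hme]
      show m ≫ q.hom = (m ≫ pushout.inl f.hom p.hom) ≫ pushout.desc q.hom f'.hom wsq
      rw [Category.assoc, pushout.inl_desc]
    rw [h1]; exact (Category.assoc e u.hom _).trans ((congrArg (e ≫ ·) hu_v).trans (Category.comp_id e))
  · refine Or.inr ⟨m, hm, ?_⟩
    have h1 : m ≫ f'.hom = (e ≫ u.hom) ≫ pushout.desc q.hom f'.hom wsq := by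
      rw [← hme]
      show m ≫ f'.hom = (m ≫ pushout.inr f.hom p.hom) ≫ pushout.desc q.hom f'.hom wsq
      rw [Category.assoc, pushout.inr_desc]
    rw [h1]; exact (Category.assoc e u.hom _).trans ((congrArg (e ≫ ·) hu_v).trans (Category.comp_id e))

end AuxPushout

open MarkedObj in
/-- if `C` is a left proper model category and `F : K ⥤ C` lands in
cofibrant objects, then in the category of marked objects (with weak equivalences
defined via the marked fibrant replacement, `𝒥 = ∅`) the pushout of a weak
equivalence which is a trivial fibration on underlying objects, along a cofibration
(a map whose underlying map is a cofibration), is again a weak equivalence. -/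
theorem markedObj_left_proper {C : Type u} [Category.{v} C]
    [HasLimits C] [HasColimits C] [ModelStruct C]
    (hproper : ∀ {A B A' P : C} (w : A ⟶ B) (c : A ⟶ A') (q : B ⟶ P) (w' : A' ⟶ P),
      IsPushout w c q w' → ModelStruct.W w → ModelStruct.Cof c → ModelStruct.W w')
    {K : Type w} [Category.{v} K] (F : K ⥤ C)
    (hF : ∀ k : K, Cofibrant (F.obj k))
    (R : C ⥤ C) (t : 𝟭 C ⟶ R)
    (hRfib : ∀ X : C, Fibrant (R.obj X))
    (hRwe : ∀ X : C, ModelStruct.W (t.app X))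
    {X Y Z T : MarkedObj F} (f : X ⟶ Y) (p : X ⟶ Z) (q : Y ⟶ T) (f' : Z ⟶ T)
    (sq : IsPushout f p q f')
    (hf : MWE R t f) (hffib : ModelStruct.Fib f.hom) (hfwe : ModelStruct.W f.hom)
    (hp : ModelStruct.Cof p.hom) :
    MWE R t f' := by
  haveI := ModelStruct.w_two_of_three (C := C)
  obtain ⟨⟨u, hu, hfu'⟩, hchar⟩ := marked_pushout_char sq
  have hWinr : ModelStruct.W (pushout.inr f.hom p.hom) :=
    hproper f.hom p.hom (pushout.inl f.hom p.hom) (pushout.inr f.hom p.hom)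
      (IsPushout.of_hasPushout f.hom p.hom) hfwe hp
  have hWf' : ModelStruct.W f'.hom :=
    MorphismProperty.of_postcomp _ f'.hom u (ModelStruct.w_of_iso u hu)
      (by rw [hfu']; exact hWinr)
  have hn : t.app Z.pt ≫ R.map f'.hom = f'.hom ≫ t.app T.pt := by
    simpa using (t.naturality f'.hom).symm
  have hWRf' : ModelStruct.W (R.map f'.hom) := by
    have h1 : ModelStruct.W (f'.hom ≫ t.app T.pt) :=
      MorphismProperty.comp_mem _ _ _ hWf' (hRwe T.pt)
    have h2 : ModelStruct.W (t.app Z.pt ≫ R.map f'.hom) := by rwa [hn]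
    exact MorphismProperty.of_precomp _ _ _ (hRwe Z.pt) h2
  refine ⟨hWf', ?_⟩
  intro k h hh
  obtain ⟨e, heT, hhom⟩ := hh
  rcases hchar heT with ⟨m, hm, rfl⟩ | ⟨m, hm, rfl⟩
  · -- the marked map comes from `Y`
    have wsq : f.hom ≫ q.hom = p.hom ≫ f'.hom := congrArg MarkedObj.Hom.hom sq.w
    have hnf : t.app X.pt ≫ R.map f.hom = f.hom ≫ t.app Y.pt := by
      simpa using (t.naturality f.hom).symm
    have hnp : t.app X.pt ≫ R.map p.hom = p.hom ≫ t.app Z.pt := by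
      simpa using (t.naturality p.hom).symm
    have hnq : t.app Y.pt ≫ R.map q.hom = q.hom ≫ t.app T.pt := by
      simpa using (t.naturality q.hom).symm
    obtain ⟨m₀, hm₀⟩ := exists_lift_of_cofibrant (hF k) hffib hfwe m
    have hmem : (m₀ ≫ t.app X.pt) ≫ R.map f.hom ∈ MarkedObj.rmMarked R t Y k := by
      have he : (m₀ ≫ t.app X.pt) ≫ R.map f.hom = m ≫ t.app Y.pt := by
        rw [Category.assoc, hnf, ← Category.assoc, hm₀]
      rw [he]
      exact ⟨m, hm, leftHomotopic_refl _⟩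
    obtain ⟨e₀, he₀, h₀⟩ := hf.2 k (m₀ ≫ t.app X.pt) hmem
    have hR : R.map p.hom ≫ R.map f'.hom = R.map f.hom ≫ R.map q.hom := by
      rw [← R.map_comp, ← R.map_comp, wsq]
    have key1 : (m ≫ q.hom) ≫ t.app T.pt =
        (m₀ ≫ t.app X.pt) ≫ (R.map p.hom ≫ R.map f'.hom) := by
      rw [← hm₀]
      simp only [Category.assoc, hR, reassoc_of% hnf, hnq]
    have key4 : (e₀ ≫ t.app X.pt) ≫ (R.map p.hom ≫ R.map f'.hom) =
        ((e₀ ≫ p.hom) ≫ t.app Z.pt) ≫ R.map f'.hom := by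
      simp only [Category.assoc, reassoc_of% hnp]
    rw [key1] at hhom
    have key2 := LeftHomotopic.comp_right' h₀ (R.map p.hom ≫ R.map f'.hom)
    have key3 := leftHomotopic_trans (hF k) hhom key2
    rw [key4] at key3
    exact ⟨e₀ ≫ p.hom, p.pres he₀, leftHomotopic_cancel hWRf' (hRfib Z.pt) key3⟩
  · -- the marked map comes from `Z`
    have hcalc : (m ≫ f'.hom) ≫ t.app T.pt = (m ≫ t.app Z.pt) ≫ R.map f'.hom := by
      simp only [Category.assoc, ← hn]
    rw [hcalc] at hhom
    exact ⟨m, hm, leftHomotopic_cancel hWRf' (hRfib Z.pt) hhom⟩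
end
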